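/- The set of diagonal matrices belonging to SL₂(L) is exactly T(L); in particular, for every nonzero t ∈ L the matrix diag(t) = [[t,0],[0,t⁻¹]] lies in SL₂(L), and conversely every diagonal matrix in SL₂(L) is diag(s) for some s in the subgroup of Kˣ generated by L \ {0}. -/

import Mathlib

open Matrix Pointwise

noncomputable section

variable {K : Type*} [Field K]

abbrev SL2 (K : Type*) [Field K] := Matrix.SpecialLinearGroup (Fin 2) K

/-- `a(t) = [[1,t],[0,1]]`. -/
def aMat (t : K) : SL2 K :=
  ⟨!![1, t; 0, 1], by simp [Matrix.det_fin_two_of]⟩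

/-- `b(t) = [[1,0],[t,1]]`. -/
def bMat (t : K) : SL2 K :=
  ⟨!![1, 0; t, 1], by simp [Matrix.det_fin_two_of]⟩

/-- `diag(s) = [[s,0],[0,s⁻¹]]`. -/
def diagMat (s : Kˣ) : SL2 K :=
  ⟨!![(s : K), 0; 0, ((s⁻¹ : Kˣ) : K)], by simp [Matrix.det_fin_two_of]⟩

/-- `w = [[0,1],[1,0]]`, in `SL₂` since `char K = 2`. -/
def wMat (K : Type*) [Field K] [CharP K 2] : SL2 K :=
  ⟨!![0, 1; 1, 0], by simp [Matrix.det_fin_two_of, CharTwo.neg_eq]⟩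

def setA (L : AddSubgroup K) : Set (SL2 K) := {g | ∃ t ∈ L, g = aMat t}

def setAop (L : AddSubgroup K) : Set (SL2 K) := {g | ∃ t ∈ L, g = bMat t}

/-- Timmesfeld's `SL₂(L)`. -/
def SL2L (L : AddSubgroup K) : Subgroup (SL2 K) := Subgroup.closure (setA L ∪ setAop L)

/-- The subgroup of `Kˣ` generated by the nonzero elements of `L`. -/
def Tgen (L : AddSubgroup K) : Subgroup Kˣ := Subgroup.closure {u : Kˣ | (u : K) ∈ L}

def setTL (L : AddSubgroup K) : Set (SL2 K) := {g | ∃ s ∈ Tgen L, g = diagMat s}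

def setTK (K : Type*) [Field K] : Set (SL2 K) := {g | ∃ s : Kˣ, g = diagMat s}

def setB (L : AddSubgroup K) : Set (SL2 K) := setTL L * setA L



section Aux

/-! ### Auxiliary computation lemmas -/

lemma SL2.ext' {g h : SL2 K} (H : (g : Matrix (Fin 2) (Fin 2) K) = h) : g = h :=
  Subtype.ext H

lemma aMat_mul (t u : K) : aMat t * aMat u = aMat (t + u) := by
  apply SL2.ext'
  simp only [Matrix.SpecialLinearGroup.coe_mul]
  simp [Matrix.SpecialLinearGroup.coe_mul, aMat, Matrix.mul_fin_two, add_comm]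

lemma aMat_zero : (aMat (0 : K)) = 1 := by
  apply SL2.ext'
  simp [aMat]
  exact Matrix.one_fin_two.symm

lemma diagMat_mul (s s' : Kˣ) : diagMat s * diagMat s' = diagMat (s * s') := by
  apply SL2.ext'
  simp only [Matrix.SpecialLinearGroup.coe_mul]
  simp [Matrix.SpecialLinearGroup.coe_mul, diagMat, Matrix.mul_fin_two, mul_comm]

lemma diagMat_one : diagMat (1 : Kˣ) = 1 := by
  apply SL2.ext'
  simp [diagMat]
  exact Matrix.one_fin_two.symm

lemma diagMat_inv (s : Kˣ) : (diagMat s)⁻¹ = diagMat s⁻¹ := by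
  rw [inv_eq_iff_mul_eq_one, diagMat_mul, mul_inv_cancel, diagMat_one]

lemma a_diag (t : K) (s : Kˣ) :
    aMat t * diagMat s = diagMat s * aMat (t * ((s⁻¹ : Kˣ) : K) ^ 2) := by
  have hs : (s : K) ≠ 0 := s.ne_zero
  have h : (s:K) * (t * ((s:K) ^ 2)⁻¹) = t * (s:K)⁻¹ := by field_simp
  apply SL2.ext'
  simp only [Matrix.SpecialLinearGroup.coe_mul]
  simp [Matrix.SpecialLinearGroup.coe_mul, aMat, diagMat, Matrix.mul_fin_two,
    Units.val_inv_eq_inv_val, h]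

variable [CharP K 2]

lemma w_a_w (t : K) : wMat K * aMat t * wMat K = bMat t := by
  apply SL2.ext'
  simp only [Matrix.SpecialLinearGroup.coe_mul]
  simp [Matrix.SpecialLinearGroup.coe_mul, wMat, aMat, bMat, Matrix.mul_fin_two]

lemma b_eq (t : K) (ht : t ≠ 0) :
    bMat t = diagMat (Units.mk0 t ht)⁻¹ * aMat t * wMat K * aMat t⁻¹ := by
  apply SL2.ext'
  simp only [Matrix.SpecialLinearGroup.coe_mul]
  ext i j
  fin_cases i <;> fin_cases j <;>
  simp [Matrix.SpecialLinearGroup.coe_mul, bMat, aMat, wMat, diagMat, Matrix.mul_apply,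
    Fin.sum_univ_succ, Units.val_inv_eq_inv_val, inv_mul_cancel₀ ht, mul_inv_cancel₀ ht,
    CharTwo.add_self_eq_zero]

lemma diag_eq_prod (t : K) (ht : t ≠ 0) :
    diagMat (Units.mk0 t ht) =
      aMat t * bMat t⁻¹ * aMat t * (aMat 1 * bMat 1 * aMat 1) := by
  apply SL2.ext'
  simp only [Matrix.SpecialLinearGroup.coe_mul]
  ext i j
  fin_cases i <;> fin_cases j <;>
  simp [Matrix.SpecialLinearGroup.coe_mul, bMat, aMat, wMat, diagMat, Matrix.mul_apply,
    Fin.sum_univ_succ, Units.val_inv_eq_inv_val, inv_mul_cancel₀ ht, mul_inv_cancel₀ ht,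
    CharTwo.add_self_eq_zero]

lemma bMat_zero : bMat (0 : K) = 1 := by
  apply SL2.ext'
  simp [bMat]
  exact Matrix.one_fin_two.symm

lemma aMat_inv (t : K) : (aMat t)⁻¹ = aMat t := by
  rw [inv_eq_iff_mul_eq_one, aMat_mul, CharTwo.add_self_eq_zero, aMat_zero]

lemma bMat_inv (t : K) : (bMat t)⁻¹ = bMat t := by
  rw [inv_eq_iff_mul_eq_one]
  apply SL2.ext'
  simp only [Matrix.SpecialLinearGroup.coe_mul]
  simp [Matrix.SpecialLinearGroup.coe_mul, bMat, Matrix.mul_fin_two,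
    CharTwo.add_self_eq_zero]
  exact Matrix.one_fin_two.symm

/-! ### Membership lemmas -/

variable {L : AddSubgroup K}

omit [CharP K 2] in
lemma L_inv_mem (hvs : ∀ s t : K, t ∈ L → s ^ 2 * t ∈ L) {t : K} (ht : t ∈ L) (h : t ≠ 0) :
    t⁻¹ ∈ L := by
  have := hvs t⁻¹ t ht
  rwa [show (t⁻¹) ^ 2 * t = t⁻¹ by field_simp] at this

/-- The Bruhat cell predicate. -/
def inBB (L : AddSubgroup K) (g : SL2 K) : Prop :=
  (∃ s ∈ Tgen L, ∃ t ∈ L, g = diagMat s * aMat t) ∨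
  (∃ s ∈ Tgen L, ∃ t ∈ L, ∃ u ∈ L, g = diagMat s * aMat t * wMat K * aMat u)

lemma diag_left_inBB {s : Kˣ} (hs : s ∈ Tgen L) {g : SL2 K} (hg : inBB L g) :
    inBB L (diagMat s * g) := by
  rcases hg with ⟨s', hs', t, ht, rfl⟩ | ⟨s', hs', t, ht, u, hu, rfl⟩
  · exact Or.inl ⟨s * s', mul_mem hs hs', t, ht, by rw [← mul_assoc, diagMat_mul]⟩
  · exact Or.inr ⟨s * s', mul_mem hs hs', t, ht, u, hu, by
      rw [← mul_assoc, ← mul_assoc, ← mul_assoc, diagMat_mul]⟩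

lemma a_left_inBB (hvs : ∀ s t : K, t ∈ L → s ^ 2 * t ∈ L)
    {r : K} (hr : r ∈ L) {g : SL2 K} (hg : inBB L g) : inBB L (aMat r * g) := by
  have key : ∀ (s : Kˣ), ∀ t : K,
      aMat r * (diagMat s * aMat t) =
        diagMat s * aMat (r * ((s⁻¹ : Kˣ) : K) ^ 2 + t) := by
    intro s t
    rw [← mul_assoc, a_diag, mul_assoc, aMat_mul]
  have hmem : ∀ s : Kˣ, r * ((s⁻¹ : Kˣ) : K) ^ 2 ∈ L := fun s => by
    have := hvs ((s⁻¹ : Kˣ) : K) r hr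
    rwa [mul_comm] at this
  rcases hg with ⟨s, hs, t, ht, rfl⟩ | ⟨s, hs, t, ht, u, hu, rfl⟩
  · exact Or.inl ⟨s, hs, _, L.add_mem (hmem s) ht, key s t⟩
  · refine Or.inr ⟨s, hs, _, L.add_mem (hmem s) ht, u, hu, ?_⟩
    calc aMat r * (diagMat s * aMat t * wMat K * aMat u)
        = (aMat r * (diagMat s * aMat t)) * wMat K * aMat u := by group
      _ = diagMat s * aMat (r * ((s⁻¹ : Kˣ) : K) ^ 2 + t) * wMat K * aMat u := by
          rw [key s t]

/-- `a(t) * b(u) * a(r)` is in the Bruhat cells. -/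
lemma a_b_a_inBB (hvs : ∀ s t : K, t ∈ L → s ^ 2 * t ∈ L)
    {t u r : K} (ht : t ∈ L) (hu : u ∈ L) (hr : r ∈ L) :
    inBB L (aMat t * bMat u * aMat r) := by
  by_cases h0 : u = 0
  · subst h0
    rw [bMat_zero, mul_one, aMat_mul]
    exact Or.inl ⟨1, one_mem _, t + r, L.add_mem ht hr, by rw [diagMat_one, one_mul]⟩
  · have hui : u⁻¹ ∈ L := L_inv_mem hvs hu h0
    have huT : Units.mk0 u h0 ∈ Tgen L := Subgroup.subset_closure hu
    have htu : t * u ^ 2 ∈ L := by have := hvs u t ht; rwa [mul_comm] at this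
    refine Or.inr ⟨(Units.mk0 u h0)⁻¹, inv_mem huT, t * u ^ 2 + u,
      L.add_mem htu hu, u⁻¹ + r, L.add_mem hui hr, ?_⟩
    have hc : aMat t * diagMat (Units.mk0 u h0)⁻¹ =
        diagMat (Units.mk0 u h0)⁻¹ * aMat (t * u ^ 2) := by
      rw [a_diag]
      norm_num
    calc aMat t * bMat u * aMat r
        = aMat t * (diagMat (Units.mk0 u h0)⁻¹ * aMat u * wMat K * aMat u⁻¹) * aMat r := by
          rw [← b_eq]
      _ = (aMat t * diagMat (Units.mk0 u h0)⁻¹) * aMat u * wMat K * (aMat u⁻¹ * aMat r) := by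
          group
      _ = diagMat (Units.mk0 u h0)⁻¹ * (aMat (t * u ^ 2) * aMat u) * wMat K *
            aMat (u⁻¹ + r) := by rw [hc, aMat_mul]; group
      _ = diagMat (Units.mk0 u h0)⁻¹ * aMat (t * u ^ 2 + u) * wMat K * aMat (u⁻¹ + r) := by
          rw [aMat_mul]

lemma mul_w_a_inBB (hvs : ∀ s t : K, t ∈ L → s ^ 2 * t ∈ L)
    {g : SL2 K} (hg : inBB L g) {r : K} (hr : r ∈ L) : inBB L (g * wMat K * aMat r) := by
  rcases hg with ⟨s, hs, t, ht, rfl⟩ | ⟨s, hs, t, ht, u, hu, rfl⟩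
  · exact Or.inr ⟨s, hs, t, ht, r, hr, rfl⟩
  · have : diagMat s * aMat t * wMat K * aMat u * wMat K * aMat r =
        diagMat s * (aMat t * bMat u * aMat r) := by
      rw [← w_a_w u]; group
    rw [this]
    exact diag_left_inBB hs (a_b_a_inBB hvs ht hu hr)

lemma b_left_inBB (hvs : ∀ s t : K, t ∈ L → s ^ 2 * t ∈ L)
    {r : K} (hr : r ∈ L) {g : SL2 K} (hg : inBB L g) : inBB L (bMat r * g) := by
  have key : ∀ (s : Kˣ), s ∈ Tgen L → ∀ t ∈ L, inBB L (bMat r * (diagMat s * aMat t)) := by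
    intro s hs t ht
    have hs0 : (s : K) ≠ 0 := s.ne_zero
    have hsc : ((s:K))⁻¹ * (r * (s:K) ^ 2) = r * (s:K) := by field_simp
    have hc : bMat r * diagMat s = diagMat s * bMat (r * ((s:K)) ^ 2) := by
      apply SL2.ext'
      simp only [Matrix.SpecialLinearGroup.coe_mul]
      simp [Matrix.SpecialLinearGroup.coe_mul, bMat, diagMat, Matrix.mul_fin_two,
        Units.val_inv_eq_inv_val, hsc]
    have hrs : r * ((s:K)) ^ 2 ∈ L := by
      have := hvs (s : K) r hr; rwa [mul_comm] at this
    have : bMat r * (diagMat s * aMat t) =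
        diagMat s * (aMat 0 * bMat (r * ((s:K)) ^ 2) * aMat t) := by
      rw [aMat_zero, one_mul, ← mul_assoc, hc, mul_assoc]
    rw [this]
    exact diag_left_inBB hs (a_b_a_inBB hvs L.zero_mem hrs ht)
  rcases hg with ⟨s, hs, t, ht, rfl⟩ | ⟨s, hs, t, ht, u, hu, rfl⟩
  · exact key s hs t ht
  · have : bMat r * (diagMat s * aMat t * wMat K * aMat u) =
        (bMat r * (diagMat s * aMat t)) * wMat K * aMat u := by group
    rw [this]
    exact mul_w_a_inBB hvs (key s hs t ht) hu

/-- Every element of `SL₂(L)` lies in `B ∪ BwA`. -/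
lemma mem_SL2L_inBB (hvs : ∀ s t : K, t ∈ L → s ^ 2 * t ∈ L)
    {g : SL2 K} (hg : g ∈ SL2L L) : inBB L g := by
  induction hg using Subgroup.closure_induction_left with
  | one => exact Or.inl ⟨1, one_mem _, 0, L.zero_mem, by rw [diagMat_one, one_mul, aMat_zero]⟩
  | mul_left x hx y hy ih =>
    rcases hx with ⟨t, ht, rfl⟩ | ⟨t, ht, rfl⟩
    · exact a_left_inBB hvs ht ih
    · exact b_left_inBB hvs ht ih
  | inv_mul_cancel x hx y hy ih =>
    rcases hx with ⟨t, ht, rfl⟩ | ⟨t, ht, rfl⟩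
    · rw [aMat_inv]; exact a_left_inBB hvs ht ih
    · rw [bMat_inv]; exact b_left_inBB hvs ht ih

lemma diagMat_mem_SL2L (hsq : ∀ x : K, x ^ 2 ∈ L)
    (hvs : ∀ s t : K, t ∈ L → s ^ 2 * t ∈ L)
    {s : Kˣ} (hs : s ∈ Tgen L) : diagMat s ∈ SL2L L := by
  have h1 : (1 : K) ∈ L := by have := hsq 1; rwa [one_pow] at this
  induction hs using Subgroup.closure_induction with
  | mem u hu =>
    have hu0 : (u : K) ≠ 0 := u.ne_zero
    have hueq : Units.mk0 (u : K) hu0 = u := Units.ext rfl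
    rw [← hueq, diag_eq_prod]
    have ha : ∀ t ∈ L, aMat t ∈ SL2L L := fun t ht =>
      Subgroup.subset_closure (Or.inl ⟨t, ht, rfl⟩)
    have hb : ∀ t ∈ L, bMat t ∈ SL2L L := fun t ht =>
      Subgroup.subset_closure (Or.inr ⟨t, ht, rfl⟩)
    exact mul_mem (mul_mem (mul_mem (ha _ hu) (hb _ (L_inv_mem hvs hu hu0))) (ha _ hu))
      (mul_mem (mul_mem (ha 1 h1) (hb 1 h1)) (ha 1 h1))
  | one => rw [diagMat_one]; exact one_mem _
  | mul x y hx hy ihx ihy => rw [← diagMat_mul]; exact mul_mem ihx ihy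
  | inv x hx ih => rw [← diagMat_inv]; exact inv_mem ih

end Aux

/-- The diagonal matrices in `SL₂(L)` are exactly `T(L)`; in particular `diag(t) ∈ SL₂(L)`
for every nonzero `t ∈ L`. -/
theorem diagonal_subgroup_of_SL2L
    [CharP K 2] (himperf : ¬ Function.Surjective fun x : K => x ^ 2)
    (L : AddSubgroup K) (hsq : ∀ x : K, x ^ 2 ∈ L)
    (hvs : ∀ s t : K, t ∈ L → s ^ 2 * t ∈ L) :
    ({g : SL2 K | g ∈ SL2L L ∧ (g : Matrix (Fin 2) (Fin 2) K) 0 1 = 0 ∧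
        (g : Matrix (Fin 2) (Fin 2) K) 1 0 = 0} = setTL L) ∧
      ∀ (t : K) (ht : t ≠ 0), t ∈ L → diagMat (Units.mk0 t ht) ∈ SL2L L := by
  constructor
  · ext g
    simp only [Set.mem_setOf_eq, setTL]
    constructor
    · rintro ⟨hg, h01, h10⟩
      rcases mem_SL2L_inBB hvs hg with ⟨s, hs, t, ht, rfl⟩ | ⟨s, hs, t, ht, u, hu, rfl⟩
      · have hentry : ((diagMat s * aMat t : SL2 K) : Matrix (Fin 2) (Fin 2) K) 0 1 =
            (s : K) * t := by
          simp only [Matrix.SpecialLinearGroup.coe_mul]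
          simp [Matrix.SpecialLinearGroup.coe_mul, diagMat, aMat, Matrix.mul_fin_two]
        rw [hentry] at h01
        have ht0 : t = 0 := by
          rcases mul_eq_zero.mp h01 with h | h
          · exact absurd h s.ne_zero
          · exact h
        exact ⟨s, hs, by rw [ht0, aMat_zero, mul_one]⟩
      · exfalso
        have hentry : ((diagMat s * aMat t * wMat K * aMat u : SL2 K) :
            Matrix (Fin 2) (Fin 2) K) 1 0 = ((s⁻¹ : Kˣ) : K) := by
          simp only [Matrix.SpecialLinearGroup.coe_mul]
          simp [Matrix.SpecialLinearGroup.coe_mul, diagMat, aMat, wMat, Matrix.mul_fin_two]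
        rw [hentry] at h10
        exact (s⁻¹).ne_zero h10
    · rintro ⟨s, hs, rfl⟩
      refine ⟨diagMat_mem_SL2L hsq hvs hs, ?_, ?_⟩ <;> simp [diagMat]
  · intro t ht htL
    exact diagMat_mem_SL2L hsq hvs (Subgroup.subset_closure htL)

end
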